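/- Let n ≥ 3, 1 ≤ k < n/2, and set ξ = exp(2πi/n) ∈ ℂ. For each j ∈ {0,…,n−1} let v_j = (1, ξ^j, ξ^{2j}, …, ξ^{(n−1)j}) ∈ ℂ^n. Then C_{n,k} · v_j = λ_j · v_j, where λ_j = ∑_{ℓ=1}^{k} (ξ^{jℓ} − ξ^{−jℓ}); moreover λ_j = 0 if and only if n divides jk or n divides j(k+1). -/

import Mathlib

open BigOperators Matrix

/-- The vector `r(l) ∈ ℂ^n`: `r(l)_0 = 0`, `r(l)_m = 1` for `1 ≤ m ≤ l`,
`r(l)_m = −1` for `n − l ≤ m ≤ n−1`, and `r(l)_m = 0` otherwise. -/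
def rVec (n l m : ℕ) : ℂ :=
  if m = 0 then 0 else if m ≤ l then 1 else if n - l ≤ m then -1 else 0

/-- The matrix `C_{n,k}`, whose `i`-th row is `T^i(r(k))`;
equivalently `(C_{n,k})_{ij} = r(k)_{(j−i) mod n}`. -/
def Cnk (n k : ℕ) : Matrix (Fin n) (Fin n) ℂ :=
  Matrix.of fun i j => rVec n k ((j.val + n - i.val) % n)

/-- `ξ = exp(2πi/n)`. -/
noncomputable def xi (n : ℕ) : ℂ := Complex.exp (2 * Real.pi * Complex.I / n)

/-- The vector `v_j = (1, ξ^j, ξ^{2j}, …, ξ^{(n−1)j})`. -/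
noncomputable def eigvec (n : ℕ) (j : Fin n) : Fin n → ℂ := fun m => xi n ^ (m.val * j.val)

/-- The eigenvalue `λ_j = ∑_{ℓ=1}^{k} (ξ^{jℓ} − ξ^{−jℓ})`. -/
noncomputable def eigval (n k : ℕ) (j : Fin n) : ℂ :=
  ∑ l ∈ Finset.Icc 1 k, (xi n ^ ((j.val : ℤ) * l) - xi n ^ (-((j.val : ℤ) * l)))

lemma xi_prim (n : ℕ) (hn : n ≠ 0) : IsPrimitiveRoot (xi n) n := by
  simpa [xi] using Complex.isPrimitiveRoot_exp n hn

lemma xi_ne_zero (n : ℕ) : xi n ≠ 0 := Complex.exp_ne_zero _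

lemma xi_pow_mod (n : ℕ) (hn : n ≠ 0) (a : ℕ) : xi n ^ (a % n) = xi n ^ a := by
  conv_rhs => rw [← Nat.mod_add_div a n]
  rw [pow_add, pow_mul, (xi_prim n hn).pow_eq_one, one_pow, mul_one]

lemma xi_pow_congr (n : ℕ) (hn : n ≠ 0) {a b : ℕ} (h : a % n = b % n) :
    xi n ^ a = xi n ^ b := by
  rw [← xi_pow_mod n hn a, ← xi_pow_mod n hn b, h]

lemma index_lemma (n : ℕ) (i l : Fin n) : ((l + i).val + n - i.val) % n = l.val := by
  have hi : i.val ≤ n := le_of_lt i.isLt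
  rw [Fin.val_add, Nat.add_sub_assoc hi, Nat.mod_add_mod]
  have : l.val + i.val + (n - i.val) = l.val + n := by omega
  rw [this, Nat.add_mod_right, Nat.mod_eq_of_lt l.isLt]

lemma identity_lemma (z : ℂ) (hz : z ≠ 0) (k : ℕ) :
    z ^ k * (z - 1) * ∑ l ∈ Finset.Icc 1 k, (z ^ (l:ℤ) - z ^ (-(l:ℤ))) =
      (z ^ (k+1) - 1) * (z ^ k - 1) := by
  induction k with
  | zero => simp
  | succ k ih =>
    rw [Finset.sum_Icc_succ_top (by omega : 1 ≤ k + 1)]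
    have h1 : z ^ (k+1) * (z ^ (k+1))⁻¹ = 1 := mul_inv_cancel₀ (pow_ne_zero _ hz)
    have h2 : z ^ (((k:ℕ)+1 : ℤ)) = z ^ (k+1) := by norm_cast
    have h3 : z ^ (-((k:ℕ)+1 : ℤ)) = (z ^ (k+1))⁻¹ := by rw [_root_.zpow_neg, h2]
    push_cast
    rw [h2, h3]
    linear_combination z * ih - (z - 1) * h1

lemma key (n k : ℕ) (hn : 3 ≤ n) (hk1 : 1 ≤ k) (hk2 : 2 * k < n) (j : Fin n) :
    ∑ l : Fin n, rVec n k l.val * xi n ^ (l.val * j.val) = eigval n k j := by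
  have hn0 : n ≠ 0 := by omega
  rw [Fin.sum_univ_eq_sum_range (fun m => rVec n k m * xi n ^ (m * j.val)) n]
  have hsub : Finset.Icc 1 k ∪ Finset.Icc (n-k) (n-1) ⊆ Finset.range n := by
    intro m hm
    simp only [Finset.mem_union, Finset.mem_Icc, Finset.mem_range] at hm ⊢
    omega
  rw [← Finset.sum_subset hsub]
  · rw [Finset.sum_union (by
      rw [Finset.disjoint_left]
      intro m hm hm'
      simp only [Finset.mem_Icc] at hm hm'
      omega)]
    have hA : ∀ m ∈ Finset.Icc 1 k, rVec n k m * xi n ^ (m * j.val) = xi n ^ (m * j.val) := by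
      intro m hm
      simp only [Finset.mem_Icc] at hm
      have : rVec n k m = 1 := by
        unfold rVec
        rw [if_neg (by omega), if_pos (by omega)]
      rw [this, one_mul]
    have hB : ∀ m ∈ Finset.Icc (n-k) (n-1),
        rVec n k m * xi n ^ (m * j.val) = -(xi n ^ (m * j.val)) := by
      intro m hm
      simp only [Finset.mem_Icc] at hm
      have : rVec n k m = -1 := by
        simp only [rVec]
        rw [if_neg (by omega), if_neg (by omega), if_pos (by omega)]
      rw [this]; ring
    rw [Finset.sum_congr rfl hA, Finset.sum_congr rfl hB]
    have hBsum : ∑ m ∈ Finset.Icc (n-k) (n-1), -(xi n ^ (m * j.val))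
        = ∑ l ∈ Finset.Icc 1 k, -(xi n ^ ((n - l) * j.val)) := by
      refine Finset.sum_nbij' (fun m => n - m) (fun l => n - l) ?_ ?_ ?_ ?_ ?_ <;>
        · intro m hm
          simp only [Finset.mem_Icc] at hm ⊢
          first
          | omega
          | (have hnm : n - (n - m) = m := by omega
             rw [hnm])
    rw [hBsum, eigval, ← Finset.sum_add_distrib]
    apply Finset.sum_congr rfl
    intro l hl
    simp only [Finset.mem_Icc] at hl
    have e1 : xi n ^ ((j.val : ℤ) * l) = xi n ^ (l * j.val) := by
      rw [← zpow_natCast (xi n) (l * j.val)]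
      congr 1
      push_cast; ring
    have e2 : xi n ^ (-((j.val : ℤ) * l)) = xi n ^ ((n - l) * j.val) := by
      have hmul : xi n ^ ((n - l) * j.val) * xi n ^ (l * j.val) = 1 := by
        rw [← pow_add]
        have h4 : (n - l) * j.val + l * j.val = n * j.val := by
          rw [← add_mul, Nat.sub_add_cancel (by omega)]
        rw [h4, pow_mul, (xi_prim n hn0).pow_eq_one, one_pow]
      rw [_root_.zpow_neg, e1, inv_eq_of_mul_eq_one_left hmul]
    rw [e1, e2]; ring
  · intro m hmr hm
    simp only [Finset.mem_union, Finset.mem_Icc, not_or, not_and_or] at hm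
    simp only [Finset.mem_range] at hmr
    have : rVec n k m = 0 := by
      simp only [rVec]
      by_cases h0 : m = 0
      · simp [h0]
      · rw [if_neg h0, if_neg (by omega), if_neg (by omega)]
    rw [this, zero_mul]

/-- Each `v_j` is an eigenvector of `C_{n,k}` with eigenvalue
`λ_j = ∑_{ℓ=1}^{k} (ξ^{jℓ} − ξ^{−jℓ})`, and `λ_j = 0` if and only if
`n ∣ jk` or `n ∣ j(k+1)`. -/
theorem Cnk_eigenvectors (n k : ℕ) (hn : 3 ≤ n) (hk1 : 1 ≤ k) (hk2 : 2 * k < n)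
    (j : Fin n) :
    Matrix.mulVec (Cnk n k) (eigvec n j) = eigval n k j • eigvec n j ∧
    (eigval n k j = 0 ↔ (n ∣ j.val * k ∨ n ∣ j.val * (k + 1))) := by
  have hn0 : n ≠ 0 := by omega
  haveI : NeZero n := ⟨hn0⟩
  constructor
  · funext i
    simp only [Matrix.mulVec, dotProduct, Pi.smul_apply, smul_eq_mul]
    rw [← Equiv.sum_comp (Equiv.addRight i)
      (fun l => Cnk n k i l * eigvec n j l)]
    have hterm : ∀ l : Fin n, Cnk n k i (Equiv.addRight i l) * eigvec n j (Equiv.addRight i l)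
        = rVec n k l.val * xi n ^ (l.val * j.val) * xi n ^ (i.val * j.val) := by
      intro l
      have hC : Cnk n k i (l + i) = rVec n k l.val := by
        show rVec n k (((l + i).val + n - i.val) % n) = rVec n k l.val
        rw [index_lemma]
      have hv : eigvec n j (l + i) = xi n ^ (l.val * j.val) * xi n ^ (i.val * j.val) := by
        show xi n ^ ((l + i).val * j.val) = _
        rw [← pow_add, ← add_mul]
        apply xi_pow_congr n hn0
        rw [Fin.val_add]
        exact (Nat.mod_modEq (l.val + i.val) n).mul_right j.val
      show Cnk n k i (l + i) * eigvec n j (l + i) = _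
      rw [hC, hv, mul_assoc]
    rw [Finset.sum_congr rfl (fun l _ => hterm l), ← Finset.sum_mul, key n k hn hk1 hk2 j]
    rfl
  · set z : ℂ := xi n ^ ((j.val : ℤ)) with hzdef
    have hz0 : z ≠ 0 := zpow_ne_zero _ (xi_ne_zero n)
    have hev : eigval n k j = ∑ l ∈ Finset.Icc 1 k, (z ^ (l:ℤ) - z ^ (-(l:ℤ))) := by
      apply Finset.sum_congr rfl
      intro l _
      rw [hzdef, ← _root_.zpow_mul, ← _root_.zpow_mul, mul_neg]
    have hpowiff : ∀ m : ℕ, z ^ m = 1 ↔ n ∣ j.val * m := by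
      intro m
      rw [hzdef, ← zpow_natCast, ← _root_.zpow_mul]
      rw [(xi_prim n hn0).zpow_eq_one_iff_dvd]
      constructor
      · intro h
        have := Int.ofNat_dvd.mp (by exact_mod_cast h)
        exact this
      · intro h
        exact_mod_cast Int.ofNat_dvd.mpr h
    by_cases h1 : z = 1
    · have hev0 : eigval n k j = 0 := by
        rw [hev, h1]
        simp
      have hdvd : n ∣ j.val * k := by
        rw [← hpowiff k, h1, one_pow]
      simp [hev0, hdvd]
    · have hkey := identity_lemma z hz0 k
      rw [← hev] at hkey
      constructor
      · intro h0
        rw [h0, mul_zero] at hkey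
        rcases mul_eq_zero.mp hkey.symm with h | h
        · exact Or.inr ((hpowiff (k+1)).mp (sub_eq_zero.mp h))
        · exact Or.inl ((hpowiff k).mp (sub_eq_zero.mp h))
      · intro h
        have hne : z ^ k * (z - 1) ≠ 0 :=
          mul_ne_zero (pow_ne_zero _ hz0) (sub_ne_zero.mpr h1)
        have : (z ^ (k+1) - 1) * (z ^ k - 1) = 0 := by
          rcases h with h | h
          · rw [← hpowiff k] at h
            rw [h]; ring
          · rw [← hpowiff (k+1)] at h
            rw [h]; ring
        rw [this] at hkey
        exact (mul_eq_zero.mp hkey).resolve_left hne
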